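/- Let μ be a probability measure on the unit circle S¹ with arclength distance d, and let p ∈ S¹ be a local or global minimum of the Fréchet functional F_μ(q) = (1/2)∫_{S¹} d(x,q)² dμ(x). Then the cut locus of p has μ-measure zero: μ({−p}) = 0. -/

import Mathlib

open MeasureTheory Real Set Filter

noncomputable section

/-- The unit circle `S¹` in `ℝ² ≃ ℂ`. -/
abbrev S1 := {x : ℂ // ‖x‖ = 1}

/-- The arclength distance on `S¹`. -/
def dS1 (x p : S1) : ℝ := 2 * Real.arcsin (‖(x : ℂ) - (p : ℂ)‖ / 2)

/-- The Fréchet functional of a measure `μ` on `S¹`. -/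
def frechet (μ : Measure S1) (p : S1) : ℝ := (1/2) * ∫ x, (dS1 x p)^2 ∂μ

/-- The normal coordinate chart centered at `p`: `θ ↦ R_θ p`. -/
def chart (p : S1) (θ : ℝ) : S1 :=
  ⟨Complex.exp (θ * Complex.I) * (p : ℂ), by
    rw [norm_mul, Complex.norm_exp_ofReal_mul_I, p.2, mul_one]⟩

/-- The inverse chart, with values in `[-π, π)`. -/
def invChart (p₀ : S1) (p : S1) : ℝ :=
  if Complex.arg ((p : ℂ) / (p₀ : ℂ)) = π then -π else Complex.arg ((p : ℂ) / (p₀ : ℂ))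

/-- The image measure `μ_{p₀}` of `μ` in the normal chart centered at `p₀`. -/
def chartMeasure (μ : Measure S1) (p₀ : S1) : Measure ℝ := Measure.map (invChart p₀) μ

/-- `m(μ_{p₀})`, the Euclidean mean of the image measure in the chart centered at `p₀`. -/
def mMean (μ : Measure S1) (p₀ : S1) : ℝ := ∫ t, t ∂(chartMeasure μ p₀)

/-- The antipodal point (cut locus) of `p`. -/
def antipode (p : S1) : S1 := ⟨-(p : ℂ), by rw [norm_neg]; exact p.2⟩

/-- The (left-continuous extension of the) derivative of `θ ↦ F_μ(e_{p₀}(θ))`. -/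
def extDerivS1 (μ : Measure S1) (p₀ : S1) (θ : ℝ) : ℝ :=
  if 0 ≤ θ then θ - 2*π*(chartMeasure μ p₀ (Ico (-π) (-π+θ))).toReal - mMean μ p₀
  else θ + 2*π*(chartMeasure μ p₀ (Ico (π+θ) π)).toReal - mMean μ p₀

def basePt : S1 := ⟨1, by norm_num⟩

/-- The (unnormalized) arclength measure on `S¹`, of total mass `2π`. -/
def arcMeasure : Measure S1 := Measure.map (chart basePt) (volume.restrict (Ico (-π) π))

/-- Property `P(p, α, φ)` for a density `f` on `S¹`. -/
def propP (f : S1 → ℝ) (p : S1) (α φ : ℝ) : Prop :=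
  ∀ θ ∈ Ico (-π) π, φ ≤ |θ| → f (chart p θ) ≤ (1 - α)/(2*π)

lemma norm_exp_sub_one (u : ℝ) : ‖Complex.exp (u * Complex.I) - 1‖ = 2 * |Real.sin (u/2)| := by
  rw [Complex.exp_mul_I]
  have h : (Complex.cos u + Complex.sin u * Complex.I - 1)
      = Complex.ofReal (Real.cos u - 1) + Complex.ofReal (Real.sin u) * Complex.I := by
    push_cast [Complex.ofReal_cos, Complex.ofReal_sin]; ring
  rw [h, Complex.norm_def, Complex.normSq_add_mul_I]
  have h2 : (Real.cos u - 1)^2 + (Real.sin u)^2 = (2*|Real.sin (u/2)|)^2 := by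
    rw [Real.abs_sin_half, mul_pow,
      Real.sq_sqrt (by nlinarith [Real.cos_le_one u] : (0:ℝ) ≤ (1 - Real.cos u)/2)]
    nlinarith [Real.sin_sq_add_cos_sq u]
  rw [h2]
  exact Real.sqrt_sq (by positivity)

lemma norm_chart_sub (p : S1) (t s : ℝ) :
    ‖(chart p t : ℂ) - (chart p s : ℂ)‖ = 2 * |Real.sin ((t-s)/2)| := by
  have e : ((t - s : ℝ) : ℂ) * Complex.I + (s:ℝ)*Complex.I = (t:ℝ)*Complex.I := by
    push_cast; ring
  have h : (chart p t : ℂ) - (chart p s : ℂ)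
      = Complex.exp ((s:ℝ)*Complex.I) * (Complex.exp (((t-s):ℝ)*Complex.I) - 1) * (p:ℂ) := by
    simp only [chart, mul_sub, sub_mul, mul_one, ← Complex.exp_add]
    rw [add_comm ((s:ℂ)*Complex.I)]
    norm_cast
    rw [e]
  rw [h, norm_mul, norm_mul, Complex.norm_exp_ofReal_mul_I, p.2, one_mul, mul_one,
    norm_exp_sub_one]

lemma abs_sin_eq {u : ℝ} (h : |u| ≤ π) : |Real.sin u| = Real.sin |u| := by
  rcases le_or_gt 0 u with hu | hu
  · rw [abs_of_nonneg hu, abs_of_nonneg (Real.sin_nonneg_of_nonneg_of_le_pi hu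
      (by rwa [abs_of_nonneg hu] at h))]
  · rw [abs_of_neg hu, Real.sin_neg, abs_of_nonpos (Real.sin_nonpos_of_nonpos_of_neg_pi_le
      hu.le (by rw [abs_of_neg hu] at h; linarith))]

lemma dS1_chart_of_le (p : S1) {t s : ℝ} (h : |t - s| ≤ π) :
    dS1 (chart p t) (chart p s) = |t - s| := by
  have hpi := Real.pi_pos
  rw [dS1, norm_chart_sub]
  have h2 : 2 * |Real.sin ((t-s)/2)| / 2 = |Real.sin ((t-s)/2)| := by ring
  have h3 : |(t-s)/2| = |t-s|/2 := by rw [abs_div]; norm_num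
  rw [h2, abs_sin_eq (by rw [h3]; linarith), h3,
    Real.arcsin_sin (by linarith [abs_nonneg (t-s)]) (by linarith)]
  ring

lemma dS1_chart_of_ge (p : S1) {t s : ℝ} (h1 : π ≤ |t - s|) (h2 : |t-s| ≤ 2*π) :
    dS1 (chart p t) (chart p s) = 2*π - |t - s| := by
  have hpi := Real.pi_pos
  rw [dS1, norm_chart_sub]
  have h4 : 2 * |Real.sin ((t-s)/2)| / 2 = |Real.sin ((t-s)/2)| := by ring
  have h3 : |(t-s)/2| = |t-s|/2 := by rw [abs_div]; norm_num
  have h5 : Real.sin (|t-s|/2) = Real.sin (π - |t-s|/2) := by rw [Real.sin_pi_sub]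
  rw [h4, abs_sin_eq (by rw [h3]; linarith), h3, h5,
    Real.arcsin_sin (by linarith) (by linarith)]
  ring

lemma S1.ne_zero (p : S1) : (p : ℂ) ≠ 0 := by
  intro h
  have := p.2
  rw [h] at this
  simp at this

lemma abs_div_eq_one (p x : S1) : ‖(x:ℂ)/(p:ℂ)‖ = 1 := by
  rw [norm_div]
  have hx : ‖(x:ℂ)‖ = 1 := x.2
  have hp : ‖(p:ℂ)‖ = 1 := p.2
  rw [hx, hp]; norm_num

lemma exp_arg_div (p x : S1) :
    Complex.exp ((Complex.arg ((x:ℂ)/(p:ℂ)) : ℂ) * Complex.I) = (x:ℂ)/(p:ℂ) := by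
  have := Complex.norm_mul_exp_arg_mul_I ((x:ℂ)/(p:ℂ))
  rwa [abs_div_eq_one, Complex.ofReal_one, one_mul] at this

lemma chart_invChart (p x : S1) : chart p (invChart p x) = x := by
  apply Subtype.ext
  show Complex.exp ((invChart p x : ℝ) * Complex.I) * (p:ℂ) = (x:ℂ)
  unfold invChart
  split_ifs with hπ
  · have hz : (x:ℂ)/(p:ℂ) = -1 := by
      rw [← exp_arg_div p x, hπ]
      push_cast
      exact Complex.exp_pi_mul_I
    have he : Complex.exp (((-π : ℝ) : ℂ) * Complex.I) = -1 := by
      push_cast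
      rw [neg_mul, Complex.exp_neg, Complex.exp_pi_mul_I]
      norm_num
    rw [he]
    rw [div_eq_iff (S1.ne_zero p)] at hz
    rw [hz]
  · rw [exp_arg_div p x, div_mul_cancel₀ _ (S1.ne_zero p)]

lemma invChart_mem (p x : S1) : invChart p x ∈ Ico (-π) π := by
  unfold invChart
  split_ifs with hπ
  · exact ⟨le_refl _, by linarith [Real.pi_pos]⟩
  · exact ⟨(Complex.neg_pi_lt_arg _).le, lt_of_le_of_ne (Complex.arg_le_pi _) hπ⟩

lemma invChart_eq_neg_pi_iff (p x : S1) : invChart p x = -π ↔ x = antipode p := by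
  unfold invChart
  constructor
  · intro h
    split_ifs at h with hπ
    · apply Subtype.ext
      have hz : (x:ℂ)/(p:ℂ) = -1 := by
        rw [← exp_arg_div p x, hπ]; push_cast; exact Complex.exp_pi_mul_I
      show (x:ℂ) = -(p:ℂ)
      rw [div_eq_iff (S1.ne_zero p)] at hz
      rw [hz]; ring
    · exact absurd h (ne_of_gt (Complex.neg_pi_lt_arg _))
  · intro h
    subst h
    have hz : ((antipode p : S1) : ℂ)/(p:ℂ) = -1 := by
      show (-(p:ℂ))/(p:ℂ) = -1
      rw [neg_div, div_self (S1.ne_zero p)]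
    rw [hz, Complex.arg_neg_one]
    simp

lemma measurable_invChart (p : S1) : Measurable (invChart p) := by
  have hf : Measurable (fun x : S1 => Complex.arg ((x:ℂ)/(p:ℂ))) :=
    Complex.measurable_arg.comp ((measurable_subtype_coe).div measurable_const)
  exact Measurable.ite (hf (measurableSet_singleton π)) measurable_const hf

lemma chart_zero (p : S1) : chart p 0 = p := by
  apply Subtype.ext
  show Complex.exp ((0:ℝ) * Complex.I) * (p:ℂ) = (p:ℂ)
  norm_num

lemma dS1_sq_base (p x : S1) : (dS1 x p)^2 = (invChart p x)^2 := by
  have hmem := invChart_mem p x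
  have hpi := Real.pi_pos
  calc (dS1 x p)^2 = (dS1 (chart p (invChart p x)) (chart p 0))^2 := by
        rw [chart_invChart, chart_zero]
    _ = (invChart p x)^2 := by
        rw [dS1_chart_of_le p (by
          rw [sub_zero, abs_le]; exact ⟨by linarith [hmem.1], by linarith [hmem.2]⟩)]
        rw [sub_zero, sq_abs]

lemma key_pos (p : S1) {θ : ℝ} (hθ0 : 0 < θ) (hθπ : θ ≤ π) (x : S1) :
    (dS1 x (chart p θ))^2 ≤ (invChart p x - θ)^2
      + Set.indicator {antipode p} (fun _ => -(4*π*θ)) x := by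
  have hpi := Real.pi_pos
  set t := invChart p x with ht
  have hmem := invChart_mem p x
  have hx : x = chart p t := (chart_invChart p x).symm
  by_cases ha : x = antipode p
  · have htval : t = -π := (invChart_eq_neg_pi_iff p x).mpr ha
    rw [Set.indicator_of_mem (by simpa using ha)]
    have habs : |t - θ| = π + θ := by rw [htval, abs_of_nonpos (by linarith)]; ring
    rw [hx, dS1_chart_of_ge p (by rw [habs]; linarith) (by rw [habs]; linarith), habs]
    nlinarith
  · rw [Set.indicator_of_notMem (by simpa using ha), add_zero]
    have htne : t ≠ -π := fun hc => ha ((invChart_eq_neg_pi_iff p x).mp hc)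
    have htgt : -π < t := lt_of_le_of_ne hmem.1 (Ne.symm htne)
    by_cases hcase : θ - π ≤ t
    · rw [hx, dS1_chart_of_le p (by rw [abs_le]; constructor <;> [linarith; linarith [hmem.2]]),
        sq_abs]
    · push_neg at hcase
      have habs : |t - θ| = θ - t := by rw [abs_of_nonpos (by linarith)]; ring
      rw [hx, dS1_chart_of_ge p (by rw [habs]; linarith) (by rw [habs]; linarith), habs]
      nlinarith

lemma key_neg (p : S1) {θ : ℝ} (hθπ : -π ≤ θ) (hθ0 : θ < 0) (x : S1) :
    (dS1 x (chart p θ))^2 ≤ (invChart p x - θ)^2 := by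
  have hpi := Real.pi_pos
  set t := invChart p x with ht
  have hmem := invChart_mem p x
  have hx : x = chart p t := (chart_invChart p x).symm
  by_cases hcase : t - θ ≤ π
  · rw [hx, dS1_chart_of_le p (by rw [abs_le]; constructor <;> [linarith [hmem.1]; linarith]),
      sq_abs]
  · push_neg at hcase
    have habs : |t - θ| = t - θ := abs_of_nonneg (by linarith)
    rw [hx, dS1_chart_of_ge p (by rw [habs]; linarith) (by rw [habs]; linarith [hmem.2]), habs]
    nlinarith

lemma abs_dS1_le (x q : S1) : |dS1 x q| ≤ π := by
  have h1 : ‖(x:ℂ) - (q:ℂ)‖ / 2 ≥ 0 := by positivity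
  have h2 := Real.arcsin_nonneg.mpr h1
  have h3 := Real.arcsin_le_pi_div_two (‖(x:ℂ) - (q:ℂ)‖ / 2)
  rw [dS1, abs_of_nonneg (by linarith)]
  linarith

lemma continuous_dS1 (q : S1) : Continuous (fun x : S1 => dS1 x q) := by
  unfold dS1
  exact continuous_const.mul (Real.continuous_arcsin.comp
    (((continuous_subtype_val.sub continuous_const).norm).div_const 2))

instance : BorelSpace S1 := Subtype.borelSpace {x : ℂ | ‖x‖ = 1}

lemma integrable_dS1_sq (μ : Measure S1) [IsProbabilityMeasure μ] (q : S1) :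
    Integrable (fun x => (dS1 x q)^2) μ := by
  refine (integrable_const (π^2)).mono'
    (((continuous_dS1 q).pow 2).aestronglyMeasurable) (ae_of_all _ fun x => ?_)
  rw [Real.norm_eq_abs, abs_pow]
  exact pow_le_pow_left₀ (abs_nonneg _) (abs_dS1_le x q) 2

/-- the cut locus of a (local or global) minimum of the Fréchet functional
has `μ`-measure zero. -/
theorem cutlocus_null_of_min (μ : Measure S1) [IsProbabilityMeasure μ] (p : S1)
    (h : IsLocalMin (frechet μ) p ∨ ∀ q : S1, frechet μ p ≤ frechet μ q) :
    μ {antipode p} = 0 := by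
  have hpi := Real.pi_pos
  set T := invChart p with hTdef
  have hTmeas := measurable_invChart p
  have hTbd : ∀ x, |T x| ≤ π := fun x => by
    have hmem := invChart_mem p x
    rw [abs_le]; exact ⟨hmem.1, hmem.2.le⟩
  have hTint : Integrable T μ := by
    refine (integrable_const π).mono' hTmeas.aestronglyMeasurable (ae_of_all _ fun x => ?_)
    simpa using hTbd x
  have hT2int : Integrable (fun x => (T x)^2) μ := by
    refine (integrable_const (π^2)).mono'
      ((hTmeas.pow_const 2).aestronglyMeasurable) (ae_of_all _ fun x => ?_)
    rw [Real.norm_eq_abs, abs_pow]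
    exact pow_le_pow_left₀ (abs_nonneg _) (hTbd x) 2
  have hsing : MeasurableSet ({antipode p} : Set S1) := by
    have he : ({antipode p} : Set S1) = Subtype.val ⁻¹' {((antipode p : S1) : ℂ)} := by
      ext x; simp [Subtype.ext_iff]
    rw [he]
    exact measurable_subtype_coe (measurableSet_singleton _)
  set a := (μ {antipode p}).toReal with ha
  have ha0 : 0 ≤ a := ENNReal.toReal_nonneg
  set m := ∫ x, T x ∂μ with hm
  have hF0 : frechet μ p = (1/2) * ∫ x, (T x)^2 ∂μ := by
    unfold frechet
    congr 1
    exact integral_congr_ae (ae_of_all _ fun x => dS1_sq_base p x)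
  have hshift_eq : ∀ θ : ℝ, (fun x => (T x - θ)^2)
      = fun x => ((T x)^2 - (2*θ) * T x) + θ^2 := by
    intro θ; funext x; ring
  have hshift_int : ∀ θ : ℝ, Integrable (fun x => (T x - θ)^2) μ := by
    intro θ
    rw [hshift_eq θ]
    exact (hT2int.sub (hTint.const_mul (2*θ))).add (integrable_const _)
  have hIshift : ∀ θ : ℝ, ∫ x, (T x - θ)^2 ∂μ = (∫ x, (T x)^2 ∂μ) - 2*θ*m + θ^2 := by
    intro θ
    have hsub : Integrable (fun x => T x ^ 2 - 2 * θ * T x) μ :=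
      hT2int.sub (hTint.const_mul (2*θ))
    rw [hshift_eq θ, integral_add hsub (integrable_const _),
      integral_sub hT2int (hTint.const_mul (2*θ)), integral_const_mul, integral_const]
    simp [measure_univ, hm]
  have hpos : ∀ θ : ℝ, 0 < θ → θ ≤ π →
      frechet μ (chart p θ) ≤ frechet μ p - θ*(m + 2*π*a) + θ^2/2 := by
    intro θ h1 h2
    have hgint : Integrable (fun x => (T x - θ)^2
        + Set.indicator {antipode p} (fun _ => -(4*π*θ)) x) μ :=
      (hshift_int θ).add ((integrable_const _).indicator hsing)
    have hmono := integral_mono (integrable_dS1_sq μ (chart p θ)) hgint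
      (fun x => key_pos p h1 h2 x)
    rw [integral_add (hshift_int θ) ((integrable_const _).indicator hsing),
      hIshift θ, integral_indicator_const _ hsing, smul_eq_mul] at hmono
    rw [measureReal_def, ← ha] at hmono
    rw [hF0]
    unfold frechet
    nlinarith [hmono]
  have hneg : ∀ θ : ℝ, -π ≤ θ → θ < 0 →
      frechet μ (chart p θ) ≤ frechet μ p - θ*m + θ^2/2 := by
    intro θ h1 h2
    have hmono := integral_mono (integrable_dS1_sq μ (chart p θ)) (hshift_int θ)
      (fun x => key_neg p h1 h2 x)
    rw [hIshift θ] at hmono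
    rw [hF0]
    unfold frechet
    nlinarith [hmono]
  have hδ : ∃ δ > 0, ∀ θ : ℝ, |θ| < δ → frechet μ p ≤ frechet μ (chart p θ) := by
    rcases h with hloc | hglob
    · have hc : Continuous (chart p) := by
        apply Continuous.subtype_mk
        exact (Complex.continuous_exp.comp
          (Complex.continuous_ofReal.mul continuous_const)).mul continuous_const
      have h0 : IsLocalMin (frechet μ ∘ chart p) 0 := by
        refine IsLocalMin.comp_continuous ?_ hc.continuousAt
        rw [chart_zero]; exact hloc
      obtain ⟨ε, hε, hev⟩ := Metric.eventually_nhds_iff.mp h0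
      refine ⟨ε, hε, fun θ hθ => ?_⟩
      have := hev (show dist θ (0:ℝ) < ε by rwa [Real.dist_eq, sub_zero])
      simpa [Function.comp, chart_zero] using this
    · exact ⟨1, one_pos, fun θ _ => hglob _⟩
  obtain ⟨δ, hδ0, hδmin⟩ := hδ
  have hkey1 : m + 2*π*a ≤ 0 := by
    by_contra hc; push_neg at hc
    set θ := min (min (δ/2) π) (m + 2*π*a) with hθdef
    have hθpos : 0 < θ := lt_min (lt_min (by linarith) hpi) hc
    have hθπ : θ ≤ π := le_trans (min_le_left _ _) (min_le_right _ _)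
    have hθδ : θ < δ := lt_of_le_of_lt (le_trans (min_le_left _ _) (min_le_left _ _))
      (by linarith)
    have h1 := hδmin θ (by rwa [abs_of_pos hθpos])
    have h2 := hpos θ hθpos hθπ
    have h4 : θ ≤ m + 2*π*a := min_le_right _ _
    nlinarith
  have hkey2 : 0 ≤ m := by
    by_contra hc; push_neg at hc
    set s := min (min (δ/2) π) (-m) with hsdef
    have hspos : 0 < s := lt_min (lt_min (by linarith) hpi) (by linarith)
    have hsπ : s ≤ π := le_trans (min_le_left _ _) (min_le_right _ _)
    have hsδ : s < δ := lt_of_le_of_lt (le_trans (min_le_left _ _) (min_le_left _ _))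
      (by linarith)
    have h1 := hδmin (-s) (by rw [abs_neg, abs_of_pos hspos]; exact hsδ)
    have h2 := hneg (-s) (by linarith) (by linarith)
    have h4 : s ≤ -m := min_le_right _ _
    nlinarith
  have haz : a = 0 := le_antisymm (by nlinarith) ha0
  rcases (ENNReal.toReal_eq_zero_iff _).mp haz with h' | h'
  · exact h'
  · exact absurd h' (measure_ne_top μ _)
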